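/- For every nonnegative integer n, the sum over k from 0 to n of (-1)^(n-k) * C(n,k) * C(n+k,k) * H_{2k} equals 3*H_n - H_{⌊n/2⌋}, as an identity of rational numbers. -/

import Mathlib

/-- The `n`-th harmonic number as a rational number. -/
def H (n : ℕ) : ℚ := ∑ j ∈ Finset.range n, 1 / ((j : ℚ) + 1)



lemma L2c (a b : ℕ) : ((a+b+1).choose a : ℚ) * (b+1) = (a+b).choose a * (a+b+1) := by
  have h := Nat.choose_mul_succ_eq (a+b) a
  have h2 : a + b + 1 - a = b + 1 := by omega
  rw [h2] at h
  exact_mod_cast h.symm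

lemma L1c (a b : ℕ) : ((a+b+1).choose (a+1) : ℚ) * (a+1) = (a+b).choose a * (a+b+1) := by
  have h : ((a+b+1).choose (a+1)) * (a+1) = ((a+b)+1) * ((a+b).choose a) := by
    simpa [Nat.succ_eq_add_one] using (Nat.add_one_mul_choose_eq (a+b) a).symm
  exact_mod_cast h.trans (Nat.mul_comm _ _)

noncomputable def q1 (n k : ℕ) : ℚ :=
  2*(k:ℚ)^2*(2*(k:ℚ)-1)*((n+2).choose k)*((n+k).choose k)/(((n:ℚ)+1)*((n:ℚ)+2))

lemma core1 (n k : ℕ) :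
    ((n:ℚ)+2) * ((n+2).choose k) * ((n+2+k).choose k)
      + ((n+1).choose k)*((n+1+k).choose k)
      - ((n:ℚ)+1)*(n.choose k)*((n+k).choose k)
    = q1 n (k+1) + q1 n k := by
  simp only [q1]
  rcases le_or_gt k n with hk | hk
  · obtain ⟨d, rfl⟩ : ∃ d, n = k + d := ⟨n - k, by omega⟩
    have hX1 := L2c k d
    have hX2 := L2c k (d+1)
    have hY1 := L2c k (k+d)
    have hY2 := L2c k (k+d+1)
    have hX2' := L1c k (d+1)
    have hY1' := L1c k (k+d)
    rw [show k+(d+1)+1 = k+d+2 by omega, show k+(d+1) = k+d+1 by omega] at hX2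
    rw [show k+(k+d)+1 = k+d+1+k by omega, show k+(k+d) = k+d+k by omega] at hY1
    rw [show k+(k+d+1)+1 = k+d+2+k by omega, show k+(k+d+1) = k+d+1+k by omega] at hY2
    rw [show k+(d+1)+1 = k+d+2 by omega, show k+(d+1) = k+d+1 by omega] at hX2'
    rw [show k+(k+d)+1 = k+d+(k+1) by omega, show k+(k+d) = k+d+k by omega] at hY1'
    push_cast at hX1 hX2 hY1 hY2 hX2' hY1' ⊢
    have e1 : ((k+d+1).choose k : ℚ) = ((k:ℚ)+d+1)/((d:ℚ)+1) * ((k+d).choose k) := by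
      field_simp; linear_combination hX1
    have e2 : ((k+d+2).choose k : ℚ) = ((k:ℚ)+d+2)/((d:ℚ)+2) * ((k+d+1).choose k) := by
      field_simp; linear_combination hX2
    have f1 : ((k+d+1+k).choose k : ℚ) = ((k:ℚ)+d+k+1)/((k:ℚ)+d+1) * ((k+d+k).choose k) := by
      field_simp; linear_combination hY1
    have f2 : ((k+d+2+k).choose k : ℚ) = ((k:ℚ)+d+k+2)/((k:ℚ)+d+2) * ((k+d+1+k).choose k) := by
      field_simp; linear_combination hY2
    have g2 : ((k+d+2).choose (k+1) : ℚ) = ((k:ℚ)+d+2)/((k:ℚ)+1) * ((k+d+1).choose k) := by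
      field_simp; linear_combination hX2'
    have h2 : ((k+d+(k+1)).choose (k+1) : ℚ) = ((k:ℚ)+d+k+1)/((k:ℚ)+1) * ((k+d+k).choose k) := by
      field_simp; linear_combination hY1'
    rw [f2, e2, g2, h2, f1, e1]
    field_simp
    ring
  · obtain rfl | rfl | hk3 : k = n+1 ∨ k = n+2 ∨ n+3 ≤ k := by omega
    · -- k = n + 1
      rw [show n+1+1 = n+2 by omega]
      have hA := L2c (n+1) n
      have hB := L2c (n+1) (n+1)
      have hC := L1c (n+1) n
      rw [show (n+1)+n+1 = n+1+(n+1) by omega, show (n+1)+n = n+(n+1) by omega] at hA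
      rw [show (n+1)+(n+1)+1 = n+2+(n+1) by omega, show (n+1)+(n+1) = n+1+(n+1) by omega] at hB
      rw [show (n+1)+n+1 = n+(n+2) by omega, show n+1+1 = n+2 by omega,
          show (n+1)+n = n+(n+1) by omega] at hC
      have z0 : (n.choose (n+1)) = 0 := Nat.choose_eq_zero_of_lt (by omega)
      have z1 : ((n+1).choose (n+1)) = 1 := Nat.choose_self _
      have z2 : ((n+2).choose (n+2)) = 1 := Nat.choose_self _
      push_cast at hA hB hC ⊢
      rw [z0, z1, z2] at *
      push_cast at *
      have eB : ((n+2+(n+1)).choose (n+1) : ℚ)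
          = (2*(n:ℚ)+3)/((n:ℚ)+2) * ((n+1+(n+1)).choose (n+1)) := by
        field_simp; linear_combination hB
      have eA : ((n+1+(n+1)).choose (n+1) : ℚ)
          = (2*(n:ℚ)+2)/((n:ℚ)+1) * ((n+(n+1)).choose (n+1)) := by
        rw [div_mul_eq_mul_div, eq_div_iff (by positivity)]; linear_combination hA
      have eC : ((n+(n+2)).choose (n+2) : ℚ)
          = (2*(n:ℚ)+2)/((n:ℚ)+2) * ((n+(n+1)).choose (n+1)) := by
        field_simp; linear_combination hC
      have z3 : (n+2).choose (n+1) = n+2 := Nat.choose_succ_self_right _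
      rw [eB, eA, eC, z3]
      push_cast
      field_simp
      ring
    · -- k = n + 2
      rw [show n+2+1 = n+3 by omega]
      have hD := L2c (n+2) (n+1)
      have hE := L2c (n+2) n
      rw [show (n+2)+(n+1)+1 = n+2+(n+2) by omega, show (n+2)+(n+1) = n+1+(n+2) by omega] at hD
      rw [show (n+2)+n+1 = n+1+(n+2) by omega, show (n+2)+n = n+(n+2) by omega] at hE
      have z0 : (n.choose (n+2)) = 0 := Nat.choose_eq_zero_of_lt (by omega)
      have z1 : ((n+1).choose (n+2)) = 0 := Nat.choose_eq_zero_of_lt (by omega)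
      have z2 : ((n+2).choose (n+2)) = 1 := Nat.choose_self _
      have z3 : ((n+2).choose (n+3)) = 0 := Nat.choose_eq_zero_of_lt (by omega)
      push_cast at hD hE ⊢
      rw [z0, z1, z2, z3]
      push_cast
      have eD : ((n+2+(n+2)).choose (n+2) : ℚ)
          = (2*(n:ℚ)+4)/((n:ℚ)+2) * ((n+1+(n+2)).choose (n+2)) := by
        field_simp; linear_combination hD
      have eE : ((n+1+(n+2)).choose (n+2) : ℚ)
          = (2*(n:ℚ)+3)/((n:ℚ)+1) * ((n+(n+2)).choose (n+2)) := by
        field_simp; linear_combination hE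
      rw [eD, eE]
      field_simp
      ring
    · have z0 : (n.choose k) = 0 := Nat.choose_eq_zero_of_lt (by omega)
      have z1 : ((n+1).choose k) = 0 := Nat.choose_eq_zero_of_lt (by omega)
      have z2 : ((n+2).choose k) = 0 := Nat.choose_eq_zero_of_lt (by omega)
      have z3 : ((n+2).choose (k+1)) = 0 := Nat.choose_eq_zero_of_lt (by omega)
      rw [z0, z1, z2, z3]
      push_cast
      ring

noncomputable def w (n k : ℕ) : ℚ :=
  2*(k:ℚ)^2*((k:ℚ)-1)*((4*((n:ℚ)+2)^2-3)*(k:ℚ) - (5*((n:ℚ)+2)^2-3))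
    * ((n+3).choose k) * ((n+k).choose k) / (((n:ℚ)+1)*((n:ℚ)+2)*((n:ℚ)+3))

lemma core2 (n k : ℕ) :
    ((n:ℚ)+1)*(k:ℚ)*(4*(k:ℚ)-1)*((n+3).choose k)*((n+1+k).choose k)
      + ((n:ℚ)+3)*(k:ℚ)*(4*(k:ℚ)-1)*((n+2).choose k)*((n+k).choose k)
    = w n (k+1) + w n k := by
  simp only [w]
  rcases le_or_gt k n with hk | hk
  · obtain ⟨d, rfl⟩ : ∃ d, n = k + d := ⟨n - k, by omega⟩
    have hX1 := L2c k d
    have hX2 := L2c k (d+1)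
    have hX3 := L2c k (d+2)
    have hY1 := L2c k (k+d)
    have hX3' := L1c k (d+2)
    have hY1' := L1c k (k+d)
    rw [show k+(d+1)+1 = k+d+2 by omega, show k+(d+1) = k+d+1 by omega] at hX2
    rw [show k+(d+2)+1 = k+d+3 by omega, show k+(d+2) = k+d+2 by omega] at hX3
    rw [show k+(k+d)+1 = k+d+1+k by omega, show k+(k+d) = k+d+k by omega] at hY1
    rw [show k+(d+2)+1 = k+d+3 by omega, show k+(d+2) = k+d+2 by omega] at hX3'
    rw [show k+(k+d)+1 = k+d+(k+1) by omega, show k+(k+d) = k+d+k by omega] at hY1'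
    push_cast at hX1 hX2 hX3 hY1 hX3' hY1' ⊢
    have e1 : ((k+d+1).choose k : ℚ) = ((k:ℚ)+d+1)/((d:ℚ)+1) * ((k+d).choose k) := by
      field_simp; linear_combination hX1
    have e2 : ((k+d+2).choose k : ℚ) = ((k:ℚ)+d+2)/((d:ℚ)+2) * ((k+d+1).choose k) := by
      field_simp; linear_combination hX2
    have e3 : ((k+d+3).choose k : ℚ) = ((k:ℚ)+d+3)/((d:ℚ)+3) * ((k+d+2).choose k) := by
      field_simp; linear_combination hX3
    have f1 : ((k+d+1+k).choose k : ℚ) = ((k:ℚ)+d+k+1)/((k:ℚ)+d+1) * ((k+d+k).choose k) := by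
      field_simp; linear_combination hY1
    have g3 : ((k+d+3).choose (k+1) : ℚ) = ((k:ℚ)+d+3)/((k:ℚ)+1) * ((k+d+2).choose k) := by
      field_simp; linear_combination hX3'
    have h2 : ((k+d+(k+1)).choose (k+1) : ℚ) = ((k:ℚ)+d+k+1)/((k:ℚ)+1) * ((k+d+k).choose k) := by
      field_simp; linear_combination hY1'
    rw [g3, e3, e2, h2, f1, e1]
    field_simp
    ring
  · obtain rfl | rfl | rfl | hk4 : k = n+1 ∨ k = n+2 ∨ k = n+3 ∨ n+4 ≤ k := by omega
    · -- k = n+1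
      rw [show n+1+1 = n+2 by omega]
      have hA := L2c (n+1) n
      have hB := L2c (n+1) 1
      have hC := L1c (n+1) n
      rw [show (n+1)+n+1 = n+1+(n+1) by omega, show (n+1)+n = n+(n+1) by omega] at hA
      rw [show (n+1)+1+1 = n+3 by omega, show (n+1)+1 = n+2 by omega] at hB
      rw [show (n+1)+n+1 = n+(n+2) by omega, show n+1+1 = n+2 by omega,
          show (n+1)+n = n+(n+1) by omega] at hC
      have z1 : ((n+2).choose (n+1)) = n+2 := Nat.choose_succ_self_right _
      have z2 : ((n+3).choose (n+2)) = n+3 := Nat.choose_succ_self_right _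
      push_cast at hA hB hC ⊢
      rw [z1] at hB
      push_cast at hB
      have eB : ((n+3).choose (n+1) : ℚ) = ((n:ℚ)+2)*((n:ℚ)+3)/2 := by
        field_simp; linear_combination hB
      have eA : ((n+1+(n+1)).choose (n+1) : ℚ)
          = (2*(n:ℚ)+2)/((n:ℚ)+1) * ((n+(n+1)).choose (n+1)) := by
        rw [div_mul_eq_mul_div, eq_div_iff (by positivity)]; linear_combination hA
      have eC : ((n+(n+2)).choose (n+2) : ℚ)
          = (2*(n:ℚ)+2)/((n:ℚ)+2) * ((n+(n+1)).choose (n+1)) := by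
        field_simp; linear_combination hC
      rw [z1, z2, eB, eA, eC]
      push_cast
      field_simp
      ring
    · -- k = n+2
      rw [show n+2+1 = n+3 by omega]
      have hF := L2c (n+2) n
      have hG := L1c (n+2) n
      rw [show (n+2)+n+1 = n+1+(n+2) by omega, show (n+2)+n = n+(n+2) by omega] at hF
      rw [show (n+2)+n+1 = n+(n+3) by omega, show n+2+1 = n+3 by omega,
          show (n+2)+n = n+(n+2) by omega] at hG
      have z1 : ((n+3).choose (n+2)) = n+3 := Nat.choose_succ_self_right _
      have z2 : ((n+2).choose (n+2)) = 1 := Nat.choose_self _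
      have z3 : ((n+3).choose (n+3)) = 1 := Nat.choose_self _
      push_cast at hF hG ⊢
      rw [z1, z2, z3]
      push_cast
      have eF : ((n+1+(n+2)).choose (n+2) : ℚ)
          = (2*(n:ℚ)+3)/((n:ℚ)+1) * ((n+(n+2)).choose (n+2)) := by
        field_simp; linear_combination hF
      have eG : ((n+(n+3)).choose (n+3) : ℚ)
          = (2*(n:ℚ)+3)/((n:ℚ)+3) * ((n+(n+2)).choose (n+2)) := by
        field_simp; linear_combination hG
      rw [eF, eG]
      field_simp
      ring
    · -- k = n+3
      rw [show n+3+1 = n+4 by omega]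
      have hH := L2c (n+3) n
      rw [show (n+3)+n+1 = n+1+(n+3) by omega, show (n+3)+n = n+(n+3) by omega] at hH
      have z1 : ((n+3).choose (n+3)) = 1 := Nat.choose_self _
      have z2 : ((n+2).choose (n+3)) = 0 := Nat.choose_eq_zero_of_lt (by omega)
      have z3 : ((n+3).choose (n+4)) = 0 := Nat.choose_eq_zero_of_lt (by omega)
      push_cast at hH ⊢
      rw [z1, z2, z3]
      push_cast
      have eH : ((n+1+(n+3)).choose (n+3) : ℚ)
          = (2*(n:ℚ)+4)/((n:ℚ)+1) * ((n+(n+3)).choose (n+3)) := by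
        field_simp; linear_combination hH
      rw [eH]
      field_simp
      ring
    · have z1 : ((n+3).choose k) = 0 := Nat.choose_eq_zero_of_lt (by omega)
      have z2 : ((n+2).choose k) = 0 := Nat.choose_eq_zero_of_lt (by omega)
      have z3 : ((n+3).choose (k+1)) = 0 := Nat.choose_eq_zero_of_lt (by omega)
      rw [z1, z2, z3]
      push_cast
      ring

noncomputable def AA (n k : ℕ) : ℚ := (-1:ℚ)^(n+k) * (n.choose k) * ((n+k).choose k)
noncomputable def bb (n k : ℕ) : ℚ :=
  (-1:ℚ)^(n+k) * (k:ℚ) * (4*(k:ℚ)-1) * ((n+2).choose k) * ((n+k).choose k)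
noncomputable def g1 (n k : ℕ) : ℚ := (-1:ℚ)^(n+k+1) * q1 n k
noncomputable def vv (n k : ℕ) : ℚ := (-1:ℚ)^(n+k) * w n k



lemma sgn2 (n k : ℕ) : (-1:ℚ)^(n+2+k) = (-1:ℚ)^(n+k) := by
  rw [show n+2+k = (n+k)+2 by omega, pow_add]; norm_num

lemma sgn1 (n k : ℕ) : (-1:ℚ)^(n+1+k) = -(-1:ℚ)^(n+k) := by
  rw [show n+1+k = (n+k)+1 by omega, pow_succ]; ring

lemma cert1s (n k : ℕ) :
    ((n:ℚ)+2) * AA (n+2) k - AA (n+1) k - ((n:ℚ)+1) * AA n k = g1 n (k+1) - g1 n k := by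
  simp only [AA, g1]
  rw [sgn2, sgn1, show n+(k+1)+1 = n+2+k by omega, sgn2,
      show n+k+1 = n+1+k by omega, sgn1]
  linear_combination ((-1:ℚ)^(n+k)) * core1 n k

lemma cert2s (n k : ℕ) :
    ((n:ℚ)+1) * bb (n+1) k - ((n:ℚ)+3) * bb n k = vv n (k+1) - vv n k := by
  simp only [bb, vv]
  rw [sgn1, show n+(k+1) = n+1+k by omega, sgn1, show n+1+2 = n+3 by omega]
  linear_combination (-(-1:ℚ)^(n+k)) * core2 n k

lemma lemW : ∀ n : ℕ, (∑ k ∈ Finset.range (n+3), bb n k) = 4*((n:ℚ)+1)*((n:ℚ)+2) := by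
  intro n
  induction n with
  | zero =>
      norm_num [bb, Finset.sum_range_succ, Nat.choose]
  | succ n ih =>
      have tele : ∑ k ∈ Finset.range (n+4),
          (((n:ℚ)+1) * bb (n+1) k - ((n:ℚ)+3) * bb n k) = vv n (n+4) - vv n 0 := by
        rw [← Finset.sum_range_sub (fun k => vv n k) (n+4)]
        exact Finset.sum_congr rfl fun k _ => cert2s n k
      have v0 : vv n 0 = 0 := by simp [vv, w]
      have vN : vv n (n+4) = 0 := by
        simp [vv, w, Nat.choose_eq_zero_of_lt (show n+3 < n+4 by omega)]
      rw [v0, vN, sub_zero] at tele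
      rw [Finset.sum_sub_distrib, ← Finset.mul_sum, ← Finset.mul_sum, sub_eq_zero] at tele
      have ext : ∑ k ∈ Finset.range (n+4), bb n k = 4*((n:ℚ)+1)*((n:ℚ)+2) := by
        rw [Finset.sum_range_succ, ih]
        have : bb n (n+3) = 0 := by
          simp [bb, Nat.choose_eq_zero_of_lt (show n+2 < n+3 by omega)]
        rw [this, add_zero]
      rw [ext] at tele
      have hne : ((n:ℚ)+1) ≠ 0 := by positivity
      rw [show n+1+3 = n+4 by omega]
      push_cast
      apply mul_left_cancel₀ hne
      rw [tele]; ring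

noncomputable def S (n : ℕ) : ℚ := ∑ k ∈ Finset.range (n+1), AA n k * H (2*k)


lemma Hsucc (m : ℕ) : H (m+1) = H m + 1/((m:ℚ)+1) := Finset.sum_range_succ _ m

lemma Hdiff (k : ℕ) : H (2*(k+1)) = H (2*k) + 1/(2*(k:ℚ)+1) + 1/(2*(k:ℚ)+2) := by
  rw [show 2*(k+1) = (2*k+1)+1 by omega, Hsucc, show 2*k+1 = (2*k)+1 from rfl, Hsucc]
  push_cast; ring

lemma abel_sum (f h : ℕ → ℚ) (N : ℕ) (h0 : f 0 * h 0 = 0) (hN : f N * h N = 0) :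
    ∑ k ∈ Finset.range N, (f (k+1) - f k) * h k
      = - ∑ k ∈ Finset.range N, f (k+1) * (h (k+1) - h k) := by
  have key : (∑ k ∈ Finset.range N,
      ((f (k+1) - f k) * h k + f (k+1) * (h (k+1) - h k))) = 0 := by
    have : ∀ k, (f (k+1) - f k) * h k + f (k+1) * (h (k+1) - h k)
        = f (k+1)*h (k+1) - f k * h k := fun k => by ring
    simp_rw [this]
    rw [Finset.sum_range_sub (fun k => f k * h k) N, hN, h0, sub_zero]
  rw [Finset.sum_add_distrib] at key
  linarith

lemma lemSrec (n : ℕ) : ((n:ℚ)+2) * S (n+2) - S (n+1) - ((n:ℚ)+1) * S n = 4 := by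
  have ext1 : S (n+1) = ∑ k ∈ Finset.range (n+3), AA (n+1) k * H (2*k) := by
    have e : ∑ k ∈ Finset.range (n+3), AA (n+1) k * H (2*k)
        = ∑ k ∈ Finset.range (n+2), AA (n+1) k * H (2*k) + AA (n+1) (n+2) * H (2*(n+2)) := by
      rw [show n+3 = (n+2)+1 by omega, Finset.sum_range_succ]
    have z : AA (n+1) (n+2) = 0 := by
      simp [AA, Nat.choose_eq_zero_of_lt (show n+1 < n+2 by omega)]
    rw [e, z, zero_mul, add_zero, S, show n+1+1 = n+2 by omega]
  have ext0 : S n = ∑ k ∈ Finset.range (n+3), AA n k * H (2*k) := by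
    have e : ∑ k ∈ Finset.range (n+3), AA n k * H (2*k)
        = ∑ k ∈ Finset.range (n+1), AA n k * H (2*k)
          + AA n (n+1) * H (2*(n+1)) + AA n (n+2) * H (2*(n+2)) := by
      rw [show n+3 = (n+2)+1 by omega, Finset.sum_range_succ,
          show n+2 = (n+1)+1 by omega, Finset.sum_range_succ]
    have z1 : AA n (n+1) = 0 := by
      simp [AA, Nat.choose_eq_zero_of_lt (show n < n+1 by omega)]
    have z2 : AA n (n+2) = 0 := by
      simp [AA, Nat.choose_eq_zero_of_lt (show n < n+2 by omega)]
    rw [e, z1, z2, zero_mul, zero_mul, add_zero, add_zero, S]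
  have ext2 : S (n+2) = ∑ k ∈ Finset.range (n+3), AA (n+2) k * H (2*k) := by
    rw [S, show n+2+1 = n+3 by omega]
  rw [ext0, ext1, ext2, Finset.mul_sum, Finset.mul_sum,
      ← Finset.sum_sub_distrib, ← Finset.sum_sub_distrib]
  have step1 : ∀ k ∈ Finset.range (n+3),
      ((n:ℚ)+2) * (AA (n+2) k * H (2*k)) - AA (n+1) k * H (2*k)
        - ((n:ℚ)+1) * (AA n k * H (2*k))
      = (g1 n (k+1) - g1 n k) * H (2*k) := by
    intro k _
    linear_combination (H (2*k)) * cert1s n k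
  rw [Finset.sum_congr rfl step1]
  have h0 : g1 n 0 * H (2*0) = 0 := by simp [g1, q1]
  have hN : g1 n (n+3) * H (2*(n+3)) = 0 := by
    simp [g1, q1, Nat.choose_eq_zero_of_lt (show n+2 < n+3 by omega)]
  rw [abel_sum (g1 n) (fun k => H (2*k)) (n+3) h0 hN]
  have step2 : ∀ k ∈ Finset.range (n+3),
      g1 n (k+1) * (H (2*(k+1)) - H (2*k)) = -(bb n (k+1) / (((n:ℚ)+1)*((n:ℚ)+2))) := by
    intro k _
    rw [Hdiff k]
    simp only [g1, q1, bb]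
    rw [show n+(k+1)+1 = (n+k)+2 by omega, show n+(k+1) = (n+k)+1 by omega,
        pow_add, pow_succ]
    have c1 : (2*(k:ℚ)+1) ≠ 0 := by positivity
    have c2 : (2*(k:ℚ)+2) ≠ 0 := by positivity
    have c3 : ((n:ℚ)+1) ≠ 0 := by positivity
    have c4 : ((n:ℚ)+2) ≠ 0 := by positivity
    push_cast
    field_simp
    ring
  rw [Finset.sum_congr rfl step2]
  rw [Finset.sum_neg_distrib, neg_neg, ← Finset.sum_div]
  have reindex : ∑ k ∈ Finset.range (n+3), bb n (k+1)
      = ∑ k ∈ Finset.range (n+4), bb n k := by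
    rw [show n+4 = (n+3)+1 by omega, Finset.sum_range_succ' (fun k => bb n k) (n+3)]
    have : bb n 0 = 0 := by simp [bb]
    rw [this, add_zero]
  rw [reindex]
  have ext : ∑ k ∈ Finset.range (n+4), bb n k = 4*((n:ℚ)+1)*((n:ℚ)+2) := by
    rw [show n+4 = (n+3)+1 by omega, Finset.sum_range_succ, lemW n]
    have : bb n (n+3) = 0 := by
      simp [bb, Nat.choose_eq_zero_of_lt (show n+2 < n+3 by omega)]
    rw [this, add_zero]
  rw [ext]
  have c3 : ((n:ℚ)+1) ≠ 0 := by positivity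
  have c4 : ((n:ℚ)+2) ≠ 0 := by positivity
  field_simp

lemma lemRrec (n : ℕ) :
    ((n:ℚ)+2) * (3*H (n+2) - H ((n+2)/2)) - (3*H (n+1) - H ((n+1)/2))
      - ((n:ℚ)+1) * (3*H n - H (n/2)) = 4 := by
  rcases Nat.even_or_odd n with ⟨t, rfl⟩ | ⟨t, rfl⟩
  · rw [show (t+t+2)/2 = t+1 by omega, show (t+t+1)/2 = t by omega,
        show (t+t)/2 = t by omega,
        show t+t+2 = (t+t+1)+1 by omega, Hsucc, Hsucc, Hsucc]
    have c1 : ((t:ℚ)+t+1) ≠ 0 := by positivity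
    have c2 : ((t:ℚ)+t+1+1) ≠ 0 := by positivity
    have c3 : ((t:ℚ)+1) ≠ 0 := by positivity
    push_cast
    field_simp
    ring
  · rw [show (2*t+1+2)/2 = t+1 by omega, show (2*t+1+1)/2 = t+1 by omega,
        show (2*t+1)/2 = t by omega,
        show 2*t+1+2 = (2*t+1+1)+1 by omega, Hsucc (2*t+1+1), Hsucc (2*t+1), Hsucc t]
    have c1 : (2*(t:ℚ)+1+1) ≠ 0 := by positivity
    have c2 : (2*(t:ℚ)+1+1+1) ≠ 0 := by positivity
    have c3 : ((t:ℚ)+1) ≠ 0 := by positivity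
    push_cast
    field_simp
    ring

lemma mainS : ∀ n : ℕ, S n = 3 * H n - H (n/2) := by
  intro n
  induction n using Nat.twoStepInduction with
  | zero => norm_num [S, AA, H]
  | one =>
      norm_num [S, AA, H, Finset.sum_range_succ, Nat.choose]
  | more n ih1 ih2 =>
      have hs := lemSrec n
      have hr := lemRrec n
      rw [ih1, ih2] at hs
      have h2 : ((n:ℚ)+2) ≠ 0 := by positivity
      apply mul_left_cancel₀ h2
      linarith

theorem stmt_2 (n : ℕ) :
    ∑ k ∈ Finset.range (n + 1),
        (-1 : ℚ)^(n - k) * (n.choose k) * ((n + k).choose k) * H (2 * k) =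
      3 * H n - H (n / 2) := by
  have conv : ∀ k ∈ Finset.range (n+1),
      (-1 : ℚ)^(n - k) * (n.choose k) * ((n + k).choose k) * H (2 * k)
        = AA n k * H (2*k) := by
    intro k hk
    have hk' : k ≤ n := Nat.lt_succ_iff.mp (Finset.mem_range.mp hk)
    have e : n + k = (n - k) + 2*k := by omega
    rw [AA, e, pow_add, pow_mul]
    norm_num
  rw [Finset.sum_congr rfl conv]
  exact mainS n
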